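/- As formal power series, ∏_{i≥1}(1−q^i) = ∑_{j=−∞}^{∞} (−1)^j q^{j(3j+1)/2}. -/

import Mathlib

set_option linter.unusedSectionVars false
set_option maxHeartbeats 1000000

open Finset

namespace Pent

/-- max of a finset of naturals, 0 for empty. -/
def mx (S : Finset ℕ) : ℕ := S.max.getD 0
/-- min of a finset of naturals, 0 for empty. -/
def mn (S : Finset ℕ) : ℕ := S.min.getD 0
/-- the largest number `≤ mx S` not in `S` (exists when `0 ∉ S`, `S` nonempty). -/
def uval (S : Finset ℕ) : ℕ := ((Finset.range (mx S + 1)) \ S).max.getD 0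

variable {S T : Finset ℕ} {a b : ℕ}

lemma mx_eq' (h : S.Nonempty) : mx S = S.max' h := by
  rw [mx, ← Finset.coe_max' h]; rfl

lemma mn_eq' (h : S.Nonempty) : mn S = S.min' h := by
  rw [mn, ← Finset.coe_min' h]; rfl

lemma mx_mem (h : S.Nonempty) : mx S ∈ S := by rw [mx_eq' h]; exact S.max'_mem h

lemma le_mx (ha : a ∈ S) : a ≤ mx S := by
  rw [mx_eq' ⟨a, ha⟩]; exact Finset.le_max' _ _ ha

lemma mn_mem (h : S.Nonempty) : mn S ∈ S := by rw [mn_eq' h]; exact S.min'_mem h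

lemma mn_le (ha : a ∈ S) : mn S ≤ a := by
  rw [mn_eq' ⟨a, ha⟩]; exact Finset.min'_le _ _ ha

lemma mx_eq (ha : a ∈ S) (h : ∀ b ∈ S, b ≤ a) : mx S = a :=
  le_antisymm (by rw [mx_eq' ⟨a, ha⟩]; exact Finset.max'_le _ _ _ h) (le_mx ha)

lemma mn_eq (ha : a ∈ S) (h : ∀ b ∈ S, a ≤ b) : mn S = a :=
  le_antisymm (mn_le ha) (by rw [mn_eq' ⟨a, ha⟩]; exact Finset.le_min' _ _ _ h)

section uval

variable (hne : S.Nonempty) (h0 : 0 ∉ S)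
include hne h0

lemma uR_nonempty : ((Finset.range (mx S + 1)) \ S).Nonempty :=
  ⟨0, by simp [h0]⟩

lemma uval_mem_R : uval S ∈ (Finset.range (mx S + 1)) \ S :=
  mx_mem (uR_nonempty hne h0)

lemma uval_not_mem : uval S ∉ S := by
  have := uval_mem_R hne h0; simp only [Finset.mem_sdiff] at this; exact this.2

lemma uval_le_mx : uval S ≤ mx S := by
  have := uval_mem_R hne h0
  simp only [Finset.mem_sdiff, Finset.mem_range] at this; omega

lemma uval_lt_mx : uval S < mx S :=
  lt_of_le_of_ne (uval_le_mx hne h0)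
    (fun h => (uval_not_mem hne h0) (h ▸ mx_mem hne))

lemma stair (hb1 : uval S < b) (hb2 : b ≤ mx S) : b ∈ S := by
  by_contra hb
  have hbR : b ∈ (Finset.range (mx S + 1)) \ S := by
    simp only [Finset.mem_sdiff, Finset.mem_range]; exact ⟨by omega, hb⟩
  have : b ≤ uval S := le_mx hbR
  omega

lemma uval_eq (ha : a ∉ S) (haM : a ≤ mx S) (h : ∀ b, a < b → b ≤ mx S → b ∈ S) :
    uval S = a := by
  have h1 : uval S ≤ a := by
    by_contra hc
    exact (uval_not_mem hne h0) (h _ (by omega) (uval_le_mx hne h0))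
  have h2 : a ≤ uval S :=
    le_mx (by simp only [Finset.mem_sdiff, Finset.mem_range]; exact ⟨by omega, ha⟩)
  omega

lemma uval_lt (ha : 1 ≤ a) (h : ∀ x, a ≤ x → x ≤ mx S → x ∈ S) : uval S < a := by
  by_contra hc
  exact (uval_not_mem hne h0) (h _ (by omega) (uval_le_mx hne h0))

/-- If the minimum exceeds `uval`, the set is the full staircase. -/
lemma eq_Ioc_of_uval_lt_mn (h : uval S < mn S) : S = Finset.Ioc (uval S) (mx S) := by
  apply Finset.ext; intro x
  simp only [Finset.mem_Ioc]
  constructor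
  · intro hx; exact ⟨lt_of_lt_of_le h (mn_le hx), le_mx hx⟩
  · intro hx; exact stair hne h0 hx.1 hx.2

lemma mn_le_uval_succ : mn S ≤ uval S + 1 := by
  rcases Nat.lt_or_ge (uval S) (mn S) with h | h
  · have hS := eq_Ioc_of_uval_lt_mn hne h0 h
    have hmem : uval S + 1 ∈ S := by
      have h2 : uval S + 1 ∈ Finset.Ioc (uval S) (mx S) := by
        simp only [Finset.mem_Ioc]
        exact ⟨by omega, by have := uval_lt_mx hne h0; omega⟩
      rwa [← hS] at h2
    have := mn_le hmem
    omega
  · omega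

end uval

/-- Franklin's involution. -/
def franklin (S : Finset ℕ) : Finset ℕ :=
  if mn S + uval S ≤ mx S then
    insert (mx S + 1) ((S.erase (mn S)).erase (mx S + 1 - mn S))
  else
    insert (mx S - uval S) (insert (uval S) (S.erase (mx S)))

/-- Exceptional (pentagonal) sets: full staircases `{u+1, …, 2u}` or `{u+1, …, 2u+1}`. -/
def Exc (S : Finset ℕ) : Prop :=
  S = Finset.Ioc (uval S) (mx S) ∧ (mx S = 2 * uval S ∨ mx S = 2 * uval S + 1)

instance : DecidablePred Exc := fun S => by unfold Exc; infer_instance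

lemma franklin_spec (hne : S.Nonempty) (h0 : 0 ∉ S) (hexc : ¬ Exc S) :
    (franklin S).sum id = S.sum id ∧
    ((franklin S).card = S.card + 1 ∨ S.card = (franklin S).card + 1) ∧
    (0 ∉ franklin S) ∧ (franklin S).Nonempty ∧ ¬ Exc (franklin S) ∧
    franklin (franklin S) = S := by
  have hm : mx S ∈ S := mx_mem hne
  have hs : mn S ∈ S := mn_mem hne
  have hsm : mn S ≤ mx S := le_mx hs
  have hu : uval S ∉ S := uval_not_mem hne h0
  have hum : uval S < mx S := uval_lt_mx hne h0
  have hst : ∀ b, uval S < b → b ≤ mx S → b ∈ S := fun b h1 h2 => stair hne h0 h1 h2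
  have hsu : mn S ≤ uval S + 1 := mn_le_uval_succ hne h0
  have hs1 : 1 ≤ mn S := Nat.one_le_iff_ne_zero.mpr (fun h => h0 (h ▸ hs))
  have hmnle : ∀ b ∈ S, mn S ≤ b := fun b hb => mn_le hb
  set m := mx S with hmdef
  set s := mn S with hsdef
  set u := uval S with hudef
  by_cases hA : s + u ≤ m
  · -- Case A
    have h2s : 2 * s ≤ m := by
      by_contra hc
      have hs_eq : s = u + 1 := by omega
      have hIoc : S = Finset.Ioc u m := eq_Ioc_of_uval_lt_mn hne h0 (by omega)
      exact hexc ⟨hIoc, Or.inr (by omega)⟩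
    have hw : m + 1 - s ∈ S := hst _ (by omega) (by omega)
    have hws : m + 1 - s ≠ s := by omega
    have hfr : franklin S = insert (m + 1) ((S.erase s).erase (m + 1 - s)) := by
      rw [franklin, if_pos hA]
    set S' := insert (m + 1) ((S.erase s).erase (m + 1 - s)) with hS'def
    have hmem' : ∀ x, x ∈ S' ↔ x = m + 1 ∨ (x ∈ S ∧ x ≠ s ∧ x ≠ m + 1 - s) := by
      intro x
      simp only [hS'def, Finset.mem_insert, Finset.mem_erase]
      tauto
    have hm1nm : m + 1 ∉ (S.erase s).erase (m + 1 - s) := by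
      intro h
      have := le_mx (Finset.mem_of_mem_erase (Finset.mem_of_mem_erase h))
      omega
    have hw' : m + 1 - s ∈ S.erase s := Finset.mem_erase.mpr ⟨hws, hw⟩
    -- card
    have c1 : (S.erase s).card = S.card - 1 := Finset.card_erase_of_mem hs
    have c2 : ((S.erase s).erase (m + 1 - s)).card = (S.erase s).card - 1 :=
      Finset.card_erase_of_mem hw'
    have c3 : S'.card = ((S.erase s).erase (m + 1 - s)).card + 1 :=
      Finset.card_insert_of_notMem hm1nm
    have cpos : 0 < (S.erase s).card := Finset.card_pos.mpr ⟨_, hw'⟩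
    have cpos2 : 0 < S.card := Finset.card_pos.mpr hne
    -- sum
    have s1 : (S.erase s).sum id + s = S.sum id := by
      have := Finset.sum_erase_add S id hs; simpa using this
    have s2 : ((S.erase s).erase (m + 1 - s)).sum id + (m + 1 - s) = (S.erase s).sum id := by
      have := Finset.sum_erase_add (S.erase s) id hw'; simpa using this
    have s3 : S'.sum id = (m + 1) + ((S.erase s).erase (m + 1 - s)).sum id := by
      have := Finset.sum_insert (f := id) hm1nm; simpa [hS'def] using this
    have hsum' : S'.sum id = S.sum id := by omega
    -- structure of S'
    have hne' : S'.Nonempty := ⟨m + 1, Finset.mem_insert_self _ _⟩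
    have h0' : 0 ∉ S' := by
      rw [hmem']
      push_neg
      exact ⟨by omega, fun h => absurd h h0⟩
    have hmx' : mx S' = m + 1 := by
      apply mx_eq (Finset.mem_insert_self _ _)
      intro b hb
      rw [hmem'] at hb
      rcases hb with h | ⟨h, _, _⟩
      · omega
      · have := le_mx h; omega
    have huv' : uval S' = m + 1 - s := by
      apply uval_eq hne' h0'
      · intro hc
        rw [hmem'] at hc
        rcases hc with h | ⟨_, _, h⟩
        · omega
        · exact h rfl
      · omega
      · intro b hb1 hb2
        rw [hmx'] at hb2
        rw [hmem']
        rcases Nat.eq_or_lt_of_le hb2 with h | h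
        · exact Or.inl h
        · have hbS : b ∈ S := hst _ (by omega) (by omega)
          exact Or.inr ⟨hbS, by omega, by omega⟩
    have hmn' : s < mn S' := by
      have h1 := mn_mem hne'
      rw [hmem'] at h1
      rcases h1 with h | ⟨h, hh, _⟩
      · omega
      · have := hmnle _ h; omega
    have hcond' : ¬ (mn S' + uval S' ≤ mx S') := by rw [huv', hmx']; omega
    have hfr' : franklin S' = S := by
      rw [franklin, if_neg hcond', hmx', huv']
      have e1 : m + 1 - (m + 1 - s) = s := by omega
      rw [e1]
      have e2 : S'.erase (m + 1) = (S.erase s).erase (m + 1 - s) :=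
        Finset.erase_insert hm1nm
      rw [e2, Finset.insert_erase hw', Finset.insert_erase hs]
    have hnexc' : ¬ Exc S' := by
      rintro ⟨_, hE2⟩
      rw [hmx', huv'] at hE2
      omega
    rw [hfr]
    exact ⟨hsum', Or.inr (by omega), h0', hne', hnexc', hfr'⟩
  · -- Case B
    have hmu : m < s + u := by omega
    have hu1 : 1 ≤ u := by omega
    have htu : m < 2 * u := by
      by_contra hc
      have h1 : m = 2 * u := by omega
      have hIoc : S = Finset.Ioc u m := eq_Ioc_of_uval_lt_mn hne h0 (by omega)
      exact hexc ⟨hIoc, Or.inl h1⟩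
    have hts : m - u < s := by omega
    have htS : m - u ∉ S := fun h => absurd (hmnle _ h) (by omega)
    have hfr : franklin S = insert (m - u) (insert u (S.erase m)) := by
      rw [franklin, if_neg hA]
    set S' := insert (m - u) (insert u (S.erase m)) with hS'def
    have hmem' : ∀ x, x ∈ S' ↔ x = m - u ∨ x = u ∨ (x ∈ S ∧ x ≠ m) := by
      intro x
      simp only [hS'def, Finset.mem_insert, Finset.mem_erase]
      tauto
    have hnm1 : u ∉ S.erase m := fun h => absurd (Finset.mem_of_mem_erase h) hu
    have hnm2 : m - u ∉ insert u (S.erase m) := by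
      simp only [Finset.mem_insert]
      push_neg
      exact ⟨by omega, fun h => absurd (Finset.mem_of_mem_erase h) htS⟩
    -- card
    have c1 : (S.erase m).card = S.card - 1 := Finset.card_erase_of_mem hm
    have c2 : (insert u (S.erase m)).card = (S.erase m).card + 1 :=
      Finset.card_insert_of_notMem hnm1
    have c3 : S'.card = (insert u (S.erase m)).card + 1 :=
      Finset.card_insert_of_notMem hnm2
    have cpos : 0 < S.card := Finset.card_pos.mpr hne
    -- sum
    have s1 : (S.erase m).sum id + m = S.sum id := by
      have := Finset.sum_erase_add S id hm; simpa using this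
    have s2 : (insert u (S.erase m)).sum id = u + (S.erase m).sum id := by
      have := Finset.sum_insert (f := id) hnm1; simpa using this
    have s3 : S'.sum id = (m - u) + (insert u (S.erase m)).sum id := by
      have := Finset.sum_insert (f := id) hnm2; simpa [hS'def] using this
    have hsum' : S'.sum id = S.sum id := by omega
    -- structure of S'
    have hne' : S'.Nonempty := ⟨m - u, Finset.mem_insert_self _ _⟩
    have h0' : 0 ∉ S' := by
      rw [hmem']; push_neg
      exact ⟨by omega, by omega, fun h => absurd h h0⟩
    have hmx' : mx S' = m - 1 := by
      apply mx_eq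
      · rw [hmem']
        rcases Nat.eq_or_lt_of_le (Nat.succ_le_of_lt hum) with h | h
        · exact Or.inr (Or.inl (by omega))
        · exact Or.inr (Or.inr ⟨hst _ (by omega) (by omega), by omega⟩)
      · intro b hb
        rw [hmem'] at hb
        rcases hb with h | h | ⟨h, hh⟩
        · omega
        · omega
        · have := le_mx h; omega
    have hmn'' : mn S' = m - u := by
      apply mn_eq (Finset.mem_insert_self _ _)
      intro b hb
      rw [hmem'] at hb
      rcases hb with h | h | ⟨h, _⟩
      · omega
      · omega
      · have := hmnle _ h; omega
    have huv' : uval S' < u := by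
      apply uval_lt hne' h0' hu1
      intro x hx1 hx2
      rw [hmx'] at hx2
      rw [hmem']
      rcases Nat.eq_or_lt_of_le hx1 with h | h
      · exact Or.inr (Or.inl h.symm)
      · exact Or.inr (Or.inr ⟨hst _ (by omega) (by omega), by omega⟩)
    have hcond' : mn S' + uval S' ≤ mx S' := by rw [hmn'', hmx']; omega
    have hfr' : franklin S' = S := by
      rw [franklin, if_pos hcond', hmx', hmn'']
      have e1 : m - 1 + 1 = m := by omega
      have e2 : m - (m - u) = u := by omega
      rw [e1, e2]
      have e3 : S'.erase (m - u) = insert u (S.erase m) := Finset.erase_insert hnm2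
      rw [e3, Finset.erase_insert hnm1, Finset.insert_erase hm]
    have hnexc' : ¬ Exc S' := by
      rintro ⟨hE1, hE2⟩
      have humx' : uval S' < mx S' := uval_lt_mx hne' h0'
      have h1 : uval S' + 1 ∈ S' := by
        have : uval S' + 1 ∈ Finset.Ioc (uval S') (mx S') := by
          simp only [Finset.mem_Ioc]; omega
        rwa [← hE1] at this
      have h2 : mn S' ≤ uval S' + 1 := mn_le h1
      have h3 : uval S' < mn S' := by
        have h4 : mn S' ∈ Finset.Ioc (uval S') (mx S') :=
          (Finset.ext_iff.mp hE1 (mn S')).mp (mn_mem hne')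
        simp only [Finset.mem_Ioc] at h4
        exact h4.1
      rw [hmn''] at h2 h3
      rw [hmx'] at hE2
      omega
    rw [hfr]
    exact ⟨hsum', Or.inl (by omega), h0', hne', hnexc', hfr'⟩

lemma sum_Ioc_id' (a d : ℕ) : (Finset.Ioc a (a + d)).sum id * 2 = (2 * a + d + 1) * d := by
  induction d with
  | zero => simp
  | succ d ih =>
    have h1 : a + (d + 1) = (a + d) + 1 := by omega
    rw [h1, Finset.sum_Ioc_succ_top (Nat.le_add_right a d)]
    have ih' : (∑ x ∈ Finset.Ioc a (a + d), x) * 2 = (2 * a + d + 1) * d := ih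
    simp only [id_eq]
    zify at ih' ⊢
    linear_combination ih' 

lemma Ioc_nonempty (h : a < b) : (Finset.Ioc a b).Nonempty :=
  ⟨b, Finset.mem_Ioc.mpr ⟨h, le_rfl⟩⟩

lemma zero_not_mem_Ioc : 0 ∉ Finset.Ioc a b := by
  simp [Finset.mem_Ioc]

lemma mx_Ioc (h : a < b) : mx (Finset.Ioc a b) = b := by
  apply mx_eq (Finset.mem_Ioc.mpr ⟨h, le_rfl⟩)
  intro c hc
  exact (Finset.mem_Ioc.mp hc).2

lemma uval_Ioc (h : a < b) : uval (Finset.Ioc a b) = a := by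
  apply uval_eq (Ioc_nonempty h) zero_not_mem_Ioc
  · simp [Finset.mem_Ioc]
  · rw [mx_Ioc h]; omega
  · intro c h1 h2
    rw [mx_Ioc h] at h2
    exact Finset.mem_Ioc.mpr ⟨h1, h2⟩

/-- the pentagonal index of an exceptional set -/
def pj (S : Finset ℕ) : ℤ :=
  if mx S = 2 * uval S then (uval S : ℤ) else -((uval S : ℤ) + 1)

/-- the exceptional set with pentagonal index `j` -/
def pS (j : ℤ) : Finset ℕ :=
  if 0 ≤ j then Finset.Ioc j.toNat (2 * j.toNat)
  else Finset.Ioc ((-j).toNat - 1) (2 * (-j).toNat - 1)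

lemma exc_sum (n : ℕ) (hn : 1 ≤ n) :
    ∑ S ∈ (((Finset.Icc 1 n).powerset.filter (fun S => S.sum id = n)).filter Exc),
        ((-1 : ℤ)) ^ S.card =
    ∑ j ∈ (Finset.Icc (-(n : ℤ)) (n : ℤ)).filter (fun j => (n : ℤ) = j * (3 * j + 1) / 2),
        ((-1 : ℤ)) ^ j.natAbs := by
  apply Finset.sum_nbij' pj pS
  · -- hi : maps into
    intro S hS
    simp only [Finset.mem_filter, Finset.mem_powerset] at hS
    obtain ⟨⟨hsub, hsum⟩, hIoc, hor⟩ := hS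
    have hne : S.Nonempty := by
      rcases S.eq_empty_or_nonempty with h | h
      · rw [h] at hsum; simp at hsum; omega
      · exact h
    have h0 : 0 ∉ S := fun h => by simpa using Finset.mem_Icc.mp (hsub h)
    have hum : uval S < mx S := uval_lt_mx hne h0
    have hm1 : 1 ≤ mx S := by
      have := Finset.mem_Icc.mp (hsub (mx_mem hne)); omega
    set m := mx S
    set u := uval S
    have h2n : 2 * n = (2 * u + (m - u) + 1) * (m - u) := by
      have hd : u + (m - u) = m := by omega
      have := sum_Ioc_id' u (m - u)
      rw [hd, ← hIoc, hsum] at this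
      omega
    simp only [Finset.mem_filter, Finset.mem_Icc, pj]
    rcases hor with h | h
    · have hu1 : 1 ≤ u := by omega
      have h2n' : 2 * n = (3 * u + 1) * u := by
        have hmu : m - u = u := by omega
        rw [hmu] at h2n
        zify at h2n ⊢
        linear_combination h2n
      have hun : u ≤ n := by nlinarith
      rw [if_pos h]
      refine ⟨⟨by omega, by omega⟩, ?_⟩
      have hq : (u : ℤ) * (3 * (u : ℤ) + 1) = 2 * (n : ℤ) := by
        have h' : 2 * (n : ℤ) = (3 * (u : ℤ) + 1) * (u : ℤ) := by exact_mod_cast h2n'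
        linear_combination -h'
      rw [hq]
      omega
    · have h2n' : 2 * n = (3 * u + 2) * (u + 1) := by
        have hmu : m - u = u + 1 := by omega
        rw [hmu] at h2n
        zify at h2n ⊢
        linear_combination h2n
      have hun : u + 1 ≤ n := by nlinarith
      rw [if_neg (by omega)]
      refine ⟨⟨by omega, by omega⟩, ?_⟩
      have hq : (-((u : ℤ) + 1)) * (3 * (-((u : ℤ) + 1)) + 1) = 2 * (n : ℤ) := by
        have h' : 2 * (n : ℤ) = (3 * (u : ℤ) + 2) * ((u : ℤ) + 1) := by exact_mod_cast h2n'
        linear_combination -h'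
      rw [hq]
      omega
  · -- hj : inverse maps into
    intro j hj
    simp only [Finset.mem_filter, Finset.mem_Icc] at hj
    obtain ⟨⟨hj1, hj2⟩, hj3⟩ := hj
    have hdvd : (2 : ℤ) ∣ j * (3 * j + 1) := by
      rcases Int.even_or_odd j with ⟨k, hk⟩ | ⟨k, hk⟩
      · exact ⟨k * (3 * j + 1), by rw [hk]; ring⟩
      · exact ⟨j * (3 * k + 2), by rw [hk]; ring⟩
    obtain ⟨c, hc⟩ := hdvd
    have h2n : 2 * (n : ℤ) = j * (3 * j + 1) := by
      rw [hc] at hj3 ⊢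
      rw [Int.mul_ediv_cancel_left _ (by norm_num)] at hj3
      omega
    have hjne : j ≠ 0 := by
      rintro rfl
      norm_num at h2n
      omega
    simp only [Finset.mem_filter, Finset.mem_powerset, pS]
    rcases le_or_gt 0 j with hj0 | hj0
    · have hj1' : 1 ≤ j := by omega
      set k := j.toNat with hkdef
      have hk : (k : ℤ) = j := Int.toNat_of_nonneg hj0
      have hk1 : 1 ≤ k := by omega
      have h2nk : 2 * n = k * (3 * k + 1) := by
        have : 2 * (n : ℤ) = (k : ℤ) * (3 * (k : ℤ) + 1) := by rw [hk]; exact h2n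
        exact_mod_cast this
      have hgauss := sum_Ioc_id' k k
      have e : k + k = 2 * k := by omega
      rw [e] at hgauss
      have hsum : (Finset.Ioc k (2 * k)).sum id = n := by
        have h5 : (((Finset.Ioc k (2 * k)).sum id : ℕ) : ℤ) * 2 = 2 * (n : ℤ) := by
          have hg : (((Finset.Ioc k (2 * k)).sum id : ℕ) : ℤ) * 2 = (2 * (k:ℤ) + (k:ℤ) + 1) * (k:ℤ) := by
            exact_mod_cast hgauss
          have hn2 : 2 * (n : ℤ) = (k : ℤ) * (3 * (k:ℤ) + 1) := by exact_mod_cast h2nk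
          linear_combination hg - hn2
        omega
      have h2kn : 2 * k ≤ n := by nlinarith [h2nk, hk1]
      rw [if_pos hj0]
      refine ⟨⟨?_, hsum⟩, ?_, ?_⟩
      · intro x hx
        rw [Finset.mem_Ioc] at hx
        rw [Finset.mem_Icc]
        omega
      · rw [uval_Ioc (by omega : k < 2 * k), mx_Ioc (by omega : k < 2 * k)]
      · rw [uval_Ioc (by omega : k < 2 * k), mx_Ioc (by omega : k < 2 * k)]
        exact Or.inl rfl
    · set k := (-j).toNat with hkdef
      have hk : (k : ℤ) = -j := Int.toNat_of_nonneg (by omega)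
      have hk1 : 1 ≤ k := by omega
      have hN : 2 * n + k = 3 * k * k := by
        have : 2 * (n : ℤ) + (k : ℤ) = 3 * (k : ℤ) * (k : ℤ) := by
          rw [hk]; linear_combination h2n
        exact_mod_cast this
      have hgauss := sum_Ioc_id' (k - 1) k
      have e : k - 1 + k = 2 * k - 1 := by omega
      have e2 : 2 * (k - 1) + k + 1 = 3 * k - 1 := by omega
      rw [e, e2] at hgauss
      have hsum : (Finset.Ioc (k - 1) (2 * k - 1)).sum id = n := by
        have h5 : (((Finset.Ioc (k - 1) (2 * k - 1)).sum id : ℕ) : ℤ) * 2 = 2 * (n : ℤ) := by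
          have hg : (((Finset.Ioc (k - 1) (2 * k - 1)).sum id : ℕ) : ℤ) * 2
              = (3 * (k : ℤ) - 1) * (k : ℤ) := by
            zify [show (1:ℕ) ≤ 3 * k by omega] at hgauss
            push_cast at hgauss ⊢
            exact hgauss
          have hn2 : 2 * (n : ℤ) + (k : ℤ) = 3 * (k : ℤ) * (k : ℤ) := by exact_mod_cast hN
          linear_combination hg - hn2
        omega
      have h2kn : 2 * k - 1 ≤ n := by nlinarith [hN, hk1]
      rw [if_neg (by omega)]
      refine ⟨⟨?_, hsum⟩, ?_, ?_⟩
      · intro x hx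
        rw [Finset.mem_Ioc] at hx
        rw [Finset.mem_Icc]
        omega
      · rw [uval_Ioc (by omega : k - 1 < 2 * k - 1), mx_Ioc (by omega : k - 1 < 2 * k - 1)]
      · rw [uval_Ioc (by omega : k - 1 < 2 * k - 1), mx_Ioc (by omega : k - 1 < 2 * k - 1)]
        exact Or.inr (by omega)
  · -- left_inv
    intro S hS
    simp only [Finset.mem_filter, Finset.mem_powerset] at hS
    obtain ⟨⟨hsub, hsum⟩, hIoc, hor⟩ := hS
    have hne : S.Nonempty := by
      rcases S.eq_empty_or_nonempty with h | h
      · rw [h] at hsum; simp at hsum; omega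
      · exact h
    have h0 : 0 ∉ S := fun h => by simpa using Finset.mem_Icc.mp (hsub h)
    have hum : uval S < mx S := uval_lt_mx hne h0
    have hm1 : 1 ≤ mx S := by
      have := Finset.mem_Icc.mp (hsub (mx_mem hne)); omega
    set m := mx S
    set u := uval S
    rcases hor with h | h
    · rw [pj, if_pos h, pS, if_pos (Int.natCast_nonneg u)]
      have e1 : ((u : ℤ)).toNat = u := by omega
      rw [e1, hIoc, h]
    · rw [pj, if_neg (by omega), pS, if_neg (by omega)]
      have e1 : (-(-((u : ℤ) + 1))).toNat = u + 1 := by omega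
      rw [e1]
      have e2 : u + 1 - 1 = u := by omega
      have e3 : 2 * (u + 1) - 1 = m := by omega
      rw [e2, e3, hIoc]
  · -- right_inv
    intro j hj
    simp only [Finset.mem_filter, Finset.mem_Icc] at hj
    obtain ⟨⟨hj1, hj2⟩, hj3⟩ := hj
    have hdvd : (2 : ℤ) ∣ j * (3 * j + 1) := by
      rcases Int.even_or_odd j with ⟨k, hk⟩ | ⟨k, hk⟩
      · exact ⟨k * (3 * j + 1), by rw [hk]; ring⟩
      · exact ⟨j * (3 * k + 2), by rw [hk]; ring⟩
    obtain ⟨c, hc⟩ := hdvd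
    have h2n : 2 * (n : ℤ) = j * (3 * j + 1) := by
      rw [hc] at hj3 ⊢
      rw [Int.mul_ediv_cancel_left _ (by norm_num)] at hj3
      omega
    have hjne : j ≠ 0 := by
      rintro rfl
      norm_num at h2n
      omega
    rcases le_or_gt 0 j with hj0 | hj0
    · rw [pS, if_pos hj0]
      set k := j.toNat with hkdef
      have hk1 : 1 ≤ k := by omega
      rw [pj, mx_Ioc (by omega : k < 2 * k), uval_Ioc (by omega : k < 2 * k), if_pos rfl]
      omega
    · rw [pS, if_neg (by omega)]
      set k := (-j).toNat with hkdef
      have hk1 : 1 ≤ k := by omega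
      rw [pj, mx_Ioc (by omega : k - 1 < 2 * k - 1), uval_Ioc (by omega : k - 1 < 2 * k - 1),
        if_neg (by omega)]
      omega
  · -- values agree
    intro S hS
    simp only [Finset.mem_filter, Finset.mem_powerset] at hS
    obtain ⟨⟨hsub, hsum⟩, hIoc, hor⟩ := hS
    have hne : S.Nonempty := by
      rcases S.eq_empty_or_nonempty with h | h
      · rw [h] at hsum; simp at hsum; omega
      · exact h
    have h0 : 0 ∉ S := fun h => by simpa using Finset.mem_Icc.mp (hsub h)
    have hum : uval S < mx S := uval_lt_mx hne h0
    set m := mx S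
    set u := uval S
    have hc : S.card = m - u := by rw [hIoc, Nat.card_Ioc]
    rcases hor with h | h
    · rw [pj, if_pos h, hc]
      have e : ((u : ℤ)).natAbs = u := by omega
      rw [e]
      congr 1
      omega
    · rw [pj, if_neg (by omega), hc]
      have e : (-((u : ℤ) + 1)).natAbs = u + 1 := by omega
      rw [e]
      congr 1
      omega

lemma franklin_closure {n : ℕ} (hn : 1 ≤ n) {S : Finset ℕ}
    (hS : S ∈ (((Finset.Icc 1 n).powerset.filter (fun S => S.sum id = n)).filter
      (fun S => ¬ Exc S))) :
    franklin S ∈ (((Finset.Icc 1 n).powerset.filter (fun S => S.sum id = n)).filter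
      (fun S => ¬ Exc S)) ∧
    ((franklin S).card = S.card + 1 ∨ S.card = (franklin S).card + 1) ∧
    franklin (franklin S) = S := by
  simp only [Finset.mem_filter, Finset.mem_powerset] at hS ⊢
  obtain ⟨⟨hsub, hsum⟩, hnexc⟩ := hS
  have hne : S.Nonempty := by
    rcases S.eq_empty_or_nonempty with h | h
    · rw [h] at hsum; simp at hsum; omega
    · exact h
  have h0 : 0 ∉ S := fun h => by simpa using Finset.mem_Icc.mp (hsub h)
  obtain ⟨hsum', hcard, h0', hne', hnexc', hff⟩ := franklin_spec hne h0 hnexc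
  refine ⟨⟨⟨?_, by rw [hsum', hsum]⟩, hnexc'⟩, hcard, hff⟩
  intro a ha
  rw [Finset.mem_Icc]
  constructor
  · have : a ≠ 0 := fun h => h0' (h ▸ ha)
    omega
  · have h1 : a ≤ (franklin S).sum id := by
      simpa using Finset.single_le_sum (f := (id : ℕ → ℕ)) (fun i _ => Nat.zero_le i) ha
    rw [hsum', hsum] at h1
    exact h1

lemma prod_expand (n : ℕ) :
    (∏ i ∈ Finset.Icc 1 n, (1 - (PowerSeries.X : PowerSeries ℤ) ^ i)) =
    ∑ t ∈ (Finset.Icc 1 n).powerset,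
      (-1 : PowerSeries ℤ) ^ t.card * PowerSeries.X ^ (t.sum id) := by
  have h1 : ∀ i ∈ Finset.Icc 1 n, (1 - (PowerSeries.X : PowerSeries ℤ) ^ i) =
      (fun i => -(PowerSeries.X : PowerSeries ℤ) ^ i) i + (fun _ => (1 : PowerSeries ℤ)) i := by
    intro i _
    simp only
    ring
  rw [Finset.prod_congr rfl h1, Finset.prod_add]
  apply Finset.sum_congr rfl
  intro t _
  rw [Finset.prod_const_one, mul_one]
  calc ∏ i ∈ t, -(PowerSeries.X : PowerSeries ℤ) ^ i
      = ∏ i ∈ t, (-1 : PowerSeries ℤ) * PowerSeries.X ^ i := by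
        apply Finset.prod_congr rfl
        intro i _
        ring
    _ = ((-1 : PowerSeries ℤ) ^ t.card) * PowerSeries.X ^ (t.sum id) := by
        rw [Finset.prod_mul_distrib, Finset.prod_const, Finset.prod_pow_eq_pow_sum]
        rfl

end Pent

theorem pentagonal_number_theorem' :
    ∀ n : ℕ,
      PowerSeries.coeff (R := ℤ) n (∏ i ∈ Finset.Icc 1 n, (1 - (PowerSeries.X : PowerSeries ℤ) ^ i)) =
        ∑ j ∈ Finset.Icc (-(n : ℤ)) (n : ℤ),
          if (n : ℤ) = j * (3 * j + 1) / 2 then (-1) ^ j.natAbs else 0 := by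
  intro n
  rcases Nat.eq_zero_or_pos n with rfl | hn
  · norm_num
  rw [Pent.prod_expand, map_sum]
  have hterm : ∀ t ∈ (Finset.Icc 1 n).powerset,
      PowerSeries.coeff (R := ℤ) n ((-1 : PowerSeries ℤ) ^ t.card * PowerSeries.X ^ (t.sum id))
      = if t.sum id = n then ((-1 : ℤ)) ^ t.card else 0 := by
    intro t _
    rw [show ((-1 : PowerSeries ℤ)) ^ t.card = PowerSeries.C (R := ℤ) ((-1 : ℤ) ^ t.card) by
      rw [map_pow, map_neg, map_one]]
    rw [PowerSeries.coeff_C_mul, PowerSeries.coeff_X_pow]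
    by_cases h : n = t.sum id
    · rw [if_pos h, if_pos h.symm, mul_one]
    · rw [if_neg h, if_neg (fun hh => h hh.symm), mul_zero]
  rw [Finset.sum_congr rfl hterm, ← Finset.sum_filter, ← Finset.sum_filter_add_sum_filter_not
        ((Finset.Icc 1 n).powerset.filter (fun S => S.sum id = n)) Pent.Exc]
  have hzero : ∑ S ∈ (((Finset.Icc 1 n).powerset.filter (fun S => S.sum id = n)).filter
      (fun S => ¬ Pent.Exc S)), ((-1 : ℤ)) ^ S.card = 0 := by
    apply Finset.sum_involution (fun S _ => Pent.franklin S)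
    · intro S hS
      rcases (Pent.franklin_closure hn hS).2.1 with hc | hc
      · rw [hc, pow_succ]; ring
      · rw [hc, pow_succ]; ring
    · intro S hS _
      intro heq
      have hcard := (Pent.franklin_closure hn hS).2.1
      rw [heq] at hcard
      omega
    · intro S hS
      exact (Pent.franklin_closure hn hS).1
    · intro S hS
      exact (Pent.franklin_closure hn hS).2.2
  rw [hzero, add_zero, Pent.exc_sum n hn, Finset.sum_filter]


/-- Euler's pentagonal number theorem
`∏_{i≥1}(1−q^i) = ∑_{j∈ℤ} (−1)^j q^{j(3j+1)/2}`, stated coefficientwise: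
the coefficient of `q^n` in the infinite product agrees with that of the finite
product over `1 ≤ i ≤ n`, and all integers `j` with `j(3j+1)/2 = n` satisfy
`-n ≤ j ≤ n`. -/
theorem pentagonal_number_theorem :
    ∀ n : ℕ,
      PowerSeries.coeff (R := ℤ) n (∏ i ∈ Finset.Icc 1 n, (1 - (PowerSeries.X : PowerSeries ℤ) ^ i)) =
        ∑ j ∈ Finset.Icc (-(n : ℤ)) (n : ℤ),
          if (n : ℤ) = j * (3 * j + 1) / 2 then (-1) ^ j.natAbs else 0 := by
  exact pentagonal_number_theorem'
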